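/- Let n : ℕ. Let Hn : Matrix (Fin n → Fin 2) (Fin n → Fin 2) ℂ be the n-qubit Hadamard transform, with entries Hn x y = (Real.sqrt 2)^{-n} · (-1)^{∑_i (x i : ℕ) · (y i : ℕ)}. Let D be any diagonal matrix in Matrix (Fin n → Fin 2) (Fin n → Fin 2) ℂ, and for i : Fin n let X_i be the bit-flip permutation matrix on coordinate i. Then the IQP unitary Hn * D * Hn commutes with X_i for every i: (Hn * D * Hn) * X_i = X_i * (Hn * D * Hn). Consequently, bit-flip errors on the input of an IQP circuit are equivalent to bit-flip errors on its output. -/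

import Mathlib

open Matrix Finset

lemma neg_one_pow_nat_congr {a b : ℕ} (h : a % 2 = b % 2) : ((-1:ℂ))^a = (-1)^b := by
  conv_lhs => rw [← Nat.div_add_mod a 2]
  conv_rhs => rw [← Nat.div_add_mod b 2]
  rw [h, pow_add, pow_add, pow_mul, pow_mul]
  norm_num

/-- IQP unitaries `Hn * D * Hn` (with `Hn` the `n`-qubit Hadamard transform and `D`
diagonal) commute with every single-qubit bit-flip `X_i`: bit-flip errors on the input
of an IQP circuit are equivalent to bit-flip errors on its output. -/
theorem iqp_commutes_with_bitflip (n : ℕ)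
    (Hn : Matrix (Fin n → Fin 2) (Fin n → Fin 2) ℂ)
    (hHn : Hn = Matrix.of fun x y : Fin n → Fin 2 =>
      (((Real.sqrt 2) ^ n)⁻¹ : ℝ) *
        (-1 : ℂ) ^ (∑ i : Fin n, (x i : ℕ) * (y i : ℕ)))
    (D : Matrix (Fin n → Fin 2) (Fin n → Fin 2) ℂ) (hD : D.IsDiag)
    (i : Fin n)
    (X : Matrix (Fin n → Fin 2) (Fin n → Fin 2) ℂ)
    (hX : X = Matrix.of fun x y : Fin n → Fin 2 =>
      if y = Function.update x i (1 - x i) then (1 : ℂ) else 0) :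
    (Hn * D * Hn) * X = X * (Hn * D * Hn) := by
  set σ : (Fin n → Fin 2) → (Fin n → Fin 2) := fun v => Function.update v i (1 - v i) with hσ
  have hinv2 : ∀ a : Fin 2, 1 - (1 - a) = a := by decide
  have hσσ : ∀ v, σ (σ v) = v := by
    intro v; funext j
    by_cases hj : j = i
    · subst hj; simp [σ, Function.update_self, hinv2]
    · simp [σ, Function.update_of_ne hj]
  -- entries of products with X
  have hXr : ∀ (A : Matrix (Fin n → Fin 2) (Fin n → Fin 2) ℂ) (x y : Fin n → Fin 2),
      (A * X) x y = A x (σ y) := by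
    intro A x y
    have hiff : ∀ z, (y = σ z) ↔ (z = σ y) := by
      intro z
      constructor
      · intro h; rw [h, hσσ]
      · intro h; rw [h, hσσ]
    rw [Matrix.mul_apply]
    simp only [hX, Matrix.of_apply, ← hσ, hiff, mul_ite, mul_one, mul_zero]
    simp only [show ∀ z, (y = Function.update z i (1 - z i)) ↔ z = σ y from hiff]
    simp
  have hXl : ∀ (A : Matrix (Fin n → Fin 2) (Fin n → Fin 2) ℂ) (x y : Fin n → Fin 2),
      (X * A) x y = A (σ x) y := by
    intro A x y
    rw [Matrix.mul_apply]
    simp only [hX, Matrix.of_apply, ← hσ, ite_mul, one_mul, zero_mul]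
    simp
    rfl
  ext x y
  rw [hXr, hXl]
  -- expand M entries, collapsing D to its diagonal
  have hM : ∀ a b : Fin n → Fin 2,
      (Hn * D * Hn) a b = ∑ z, Hn a z * D z z * Hn z b := by
    intro a b
    rw [Matrix.mul_apply]
    refine Finset.sum_congr rfl fun z _ => ?_
    congr 1
    rw [Matrix.mul_apply]
    rw [Finset.sum_eq_single z]
    · intro w _ hw
      rw [hD hw, mul_zero]
    · intro h; exact absurd (mem_univ z) h
  rw [hM, hM]
  refine Finset.sum_congr rfl fun z _ => ?_
  have hspl : ∀ (v w : Fin n → Fin 2),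
      ∑ j, ((σ v) j : ℕ) * (w j : ℕ)
        = ((1 - v i : Fin 2) : ℕ) * (w i : ℕ) + ∑ j ∈ univ.erase i, (v j : ℕ) * (w j : ℕ) := by
    intro v w
    rw [← Finset.add_sum_erase _ _ (mem_univ i)]
    congr 1
    · simp [σ]
    · refine Finset.sum_congr rfl fun j hj => ?_
      simp [σ, Function.update_of_ne (Finset.ne_of_mem_erase hj)]
  have hspl' : ∀ (v w : Fin n → Fin 2),
      ∑ j, (v j : ℕ) * ((σ w) j : ℕ)
        = (v i : ℕ) * ((1 - w i : Fin 2) : ℕ) + ∑ j ∈ univ.erase i, (v j : ℕ) * (w j : ℕ) := by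
    intro v w
    rw [← Finset.add_sum_erase _ _ (mem_univ i)]
    congr 1
    · simp [σ]
    · refine Finset.sum_congr rfl fun j hj => ?_
      simp [σ, Function.update_of_ne (Finset.ne_of_mem_erase hj)]
  have hplain : ∀ (v w : Fin n → Fin 2),
      ∑ j, (v j : ℕ) * (w j : ℕ)
        = (v i : ℕ) * (w i : ℕ) + ∑ j ∈ univ.erase i, (v j : ℕ) * (w j : ℕ) :=
    fun v w => (Finset.add_sum_erase _ _ (mem_univ i)).symm
  have key : (-1:ℂ) ^ (∑ j, (x j : ℕ) * (z j : ℕ) + ∑ j, (z j : ℕ) * ((σ y) j : ℕ))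
      = (-1:ℂ) ^ (∑ j, ((σ x) j : ℕ) * (z j : ℕ) + ∑ j, (z j : ℕ) * (y j : ℕ)) := by
    apply neg_one_pow_nat_congr
    rw [hspl', hspl, hplain x z, hplain z y]
    have hcase : ∀ a b c : Fin 2, ∀ A B : ℕ,
        ((a : ℕ) * (c : ℕ) + A + ((c : ℕ) * ((1 - b : Fin 2) : ℕ) + B)) % 2
          = (((1 - a : Fin 2) : ℕ) * (c : ℕ) + A + ((c : ℕ) * (b : ℕ) + B)) % 2 := by
      intro a b c A B
      fin_cases a <;> fin_cases b <;> fin_cases c <;> simp <;> omega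
    exact hcase (x i) (y i) (z i) _ _
  rw [pow_add, pow_add] at key
  simp only [hHn, Matrix.of_apply]
  linear_combination ((((Real.sqrt 2) ^ n)⁻¹ : ℝ) : ℂ) * ((((Real.sqrt 2) ^ n)⁻¹ : ℝ) : ℂ) * D z z * key
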